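/- Let (θ_n) be a sequence of probability measures on G such that Δ(m, θ_n) → 0 as n → ∞ for every probability measure m ≺ λ, and let φ be a probability measure on G with φ ≺ λ. Then Δ(m, φ * θ_n) → 0 as n → ∞ for every probability measure m ≺ λ. -/

import Mathlib

open MeasureTheory Filter Topology Set MeasurableSpace
open scoped ENNReal NNReal

/-- Total variation norm `‖μ − ν‖` of the difference of two finite measures. -/
noncomputable def tv {α : Type*} [MeasurableSpace α] (μ ν : Measure α) : ℝ :=
  ((μ - ν) Set.univ + (ν - μ) Set.univ).toReal

/-- Pushforward `gμ` of a measure on `G` under the left translation `h ↦ g * h`. -/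
noncomputable def ltrans {G : Type*} [MeasurableSpace G] [Mul G] (g : G) (μ : Measure G) :
    Measure G :=
  μ.map (fun h => g * h)

/-- Convolution `α * β` of measures on `G`: the pushforward of `α ⊗ β` under
`(g, h) ↦ g * h`. -/
noncomputable def mconv {G : Type*} [MeasurableSpace G] [Mul G] (μ ν : Measure G) : Measure G :=
  (μ.prod ν).map (fun p : G × G => p.1 * p.2)

/-- `convPow θ k = θ^{*k}`, the `k`-th convolution power of `θ` (with `θ^{*0} = δ_1`). -/
noncomputable def convPow {G : Type*} [MeasurableSpace G] [Monoid G] (θ : Measure G) :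
    ℕ → Measure G
  | 0 => Measure.dirac 1
  | (k + 1) => mconv θ (convPow θ k)

/-- Mean discrepancy `Δ(m, θ) = ∫_G ‖gθ − θ‖ dm(g)`. -/
noncomputable def disc {G : Type*} [MeasurableSpace G] [Mul G] (m θ : Measure G) : ℝ :=
  ∫ g, tv (ltrans g θ) θ ∂m

section AuxLemmas

variable {α : Type*} [MeasurableSpace α]

/-- For finite measures, `μ ≤ (μ - ν) + ν`. -/
lemma my_le_sub_add (μ ν : Measure α) [IsFiniteMeasure μ] [IsFiniteMeasure ν] :
    μ ≤ (μ - ν) + ν := by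
  obtain ⟨s, hs, h1, h2⟩ := hahn_decomposition (μ := μ) (ν := ν)
  rw [Measure.le_iff]
  intro t ht
  have hres : ν.restrict s ≤ μ.restrict s := by
    rw [Measure.le_iff]
    intro u hu
    rw [Measure.restrict_apply hu, Measure.restrict_apply hu]
    exact h1 _ (hu.inter hs) inter_subset_right
  have key : (μ - ν) (t ∩ s) = μ (t ∩ s) - ν (t ∩ s) := by
    have hts : MeasurableSet (t ∩ s) := ht.inter hs
    calc (μ - ν) (t ∩ s) = (μ - ν).restrict s (t ∩ s) := by
          rw [Measure.restrict_apply hts, inter_assoc, inter_self]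
      _ = (μ.restrict s - ν.restrict s) (t ∩ s) := by
          rw [Measure.restrict_sub_eq_restrict_sub_restrict hs]
      _ = μ.restrict s (t ∩ s) - ν.restrict s (t ∩ s) := Measure.sub_apply hts hres
      _ = μ (t ∩ s) - ν (t ∩ s) := by
          rw [Measure.restrict_apply hts, Measure.restrict_apply hts, inter_assoc, inter_self]
  have hle : ν (t ∩ s) ≤ μ (t ∩ s) := h1 _ (ht.inter hs) inter_subset_right
  have hdiff : μ (t \ s) ≤ ν (t \ s) := h2 _ (ht.diff hs) (diff_subset_compl t s)
  calc μ t = μ (t ∩ s) + μ (t \ s) := (measure_inter_add_diff t hs).symm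
    _ ≤ ((μ - ν) (t ∩ s) + ν (t ∩ s)) + ν (t \ s) := by
        refine add_le_add ?_ hdiff
        rw [key, tsub_add_cancel_of_le hle]
    _ = (μ - ν) (t ∩ s) + ν t := by rw [add_assoc, measure_inter_add_diff t hs]
    _ ≤ (μ - ν) t + ν t := add_le_add (measure_mono inter_subset_left) le_rfl

/-- For finite measures, `(μ - ν) univ = μ s - ν s` on a Hahn set, giving the sup formula. -/
lemma my_sub_univ_eq_iSup [CountablyGenerated α] (μ ν : Measure α) [IsFiniteMeasure μ]
    [IsFiniteMeasure ν] {e : ℕ → Set α}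
    (he : generateSetAlgebra (countableGeneratingSet α) = Set.range e) :
    (μ - ν) Set.univ = ⨆ n, (μ (e n) - ν (e n)) := by
  have h𝒜 : (μ + ν).MeasureDense (generateSetAlgebra (countableGeneratingSet α)) :=
    Measure.MeasureDense.of_generateFrom_isSetAlgebra_finite (μ + ν) isSetAlgebra_generateSetAlgebra
      (by rw [generateFrom_generateSetAlgebra_eq, generateFrom_countableGeneratingSet])
  have hemeas : ∀ n, MeasurableSet (e n) := by
    intro n
    exact h𝒜.measurable _ (he ▸ Set.mem_range_self n)
  apply le_antisymm
  · -- ≤ : via Hahn decomposition and approximation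
    obtain ⟨s, hs, h1, h2⟩ := hahn_decomposition (μ := μ) (ν := ν)
    have h0 : (μ - ν) sᶜ = 0 := by
      apply Measure.sub_apply_eq_zero_of_restrict_le_restrict _ hs.compl
      rw [Measure.le_iff]
      intro u hu
      rw [Measure.restrict_apply hu, Measure.restrict_apply hu]
      exact h2 _ (hu.inter hs.compl) inter_subset_right
    have hres : ν.restrict s ≤ μ.restrict s := by
      rw [Measure.le_iff]
      intro u hu
      rw [Measure.restrict_apply hu, Measure.restrict_apply hu]
      exact h1 _ (hu.inter hs) inter_subset_right
    have huniv : (μ - ν) Set.univ = μ s - ν s := by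
      rw [← measure_add_measure_compl hs, h0, add_zero]
      calc (μ - ν) s = (μ - ν).restrict s s := by
            rw [Measure.restrict_apply hs, inter_self]
        _ = (μ.restrict s - ν.restrict s) s := by
            rw [Measure.restrict_sub_eq_restrict_sub_restrict hs]
        _ = μ.restrict s s - ν.restrict s s := Measure.sub_apply hs hres
        _ = μ s - ν s := by simp [Measure.restrict_apply hs]
    rw [huniv]
    apply ENNReal.le_of_forall_pos_le_add
    intro ε hε _
    have hε2 : (0 : ℝ) < (ε : ℝ) / 2 := by positivity
    obtain ⟨t, ht𝒜, hst⟩ := h𝒜.approx s hs (measure_ne_top _ _) ((ε : ℝ) / 2) hε2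
    obtain ⟨n, rfl⟩ : ∃ n, e n = t := by rwa [he, Set.mem_range] at ht𝒜
    set t := e n
    have htmeas : MeasurableSet t := hemeas n
    have hμd : μ (s \ t) ≤ ENNReal.ofReal ((ε : ℝ) / 2) := by
      refine le_trans (le_trans ?_ (le_of_lt hst)) le_rfl
      refine le_trans (measure_mono ?_) (Measure.le_iff'.1 (Measure.le_add_right le_rfl) _)
      exact (Set.subset_union_left).trans (subset_of_eq (Set.symmDiff_def s t).symm)
    have hνd : ν (t \ s) ≤ ENNReal.ofReal ((ε : ℝ) / 2) := by
      refine le_trans ?_ (le_of_lt hst)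
      refine le_trans (measure_mono ?_) (Measure.le_iff'.1 (Measure.le_add_left le_rfl) _)
      exact (Set.subset_union_right).trans (subset_of_eq (Set.symmDiff_def s t).symm)
    have key : μ s ≤ ((⨆ m, (μ (e m) - ν (e m))) + ε) + ν s := by
      have h1' : μ s ≤ μ t + ENNReal.ofReal ((ε : ℝ) / 2) := by
        calc μ s ≤ μ (t ∪ (s \ t)) := measure_mono (by intro x hx; by_cases h : x ∈ t <;> simp [h, hx])
          _ ≤ μ t + μ (s \ t) := measure_union_le _ _
          _ ≤ μ t + ENNReal.ofReal ((ε : ℝ) / 2) := add_le_add le_rfl hμd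
      have h2' : μ t ≤ (μ t - ν t) + ν t := le_tsub_add
      have h3' : ν t ≤ ν s + ENNReal.ofReal ((ε : ℝ) / 2) := by
        calc ν t ≤ ν (s ∪ (t \ s)) := measure_mono (by intro x hx; by_cases h : x ∈ s <;> simp [h, hx])
          _ ≤ ν s + ν (t \ s) := measure_union_le _ _
          _ ≤ ν s + ENNReal.ofReal ((ε : ℝ) / 2) := add_le_add le_rfl hνd
      have hsup : μ t - ν t ≤ ⨆ m, (μ (e m) - ν (e m)) := le_iSup (fun m => μ (e m) - ν (e m)) n
      have hεε : ENNReal.ofReal ((ε : ℝ) / 2) + ENNReal.ofReal ((ε : ℝ) / 2) = (ε : ℝ≥0∞) := by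
        rw [← ENNReal.ofReal_add (le_of_lt hε2) (le_of_lt hε2), add_halves]
        exact ENNReal.ofReal_coe_nnreal
      calc μ s ≤ μ t + ENNReal.ofReal ((ε : ℝ) / 2) := h1'
        _ ≤ ((μ t - ν t) + ν t) + ENNReal.ofReal ((ε : ℝ) / 2) := add_le_add h2' le_rfl
        _ ≤ ((μ t - ν t) + (ν s + ENNReal.ofReal ((ε : ℝ) / 2))) + ENNReal.ofReal ((ε : ℝ) / 2) :=
            add_le_add (add_le_add le_rfl h3') le_rfl
        _ = ((μ t - ν t) + (ENNReal.ofReal ((ε : ℝ) / 2) + ENNReal.ofReal ((ε : ℝ) / 2))) + ν s := by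
            ring
        _ = ((μ t - ν t) + (ε : ℝ≥0∞)) + ν s := by rw [hεε]
        _ ≤ ((⨆ m, (μ (e m) - ν (e m))) + ε) + ν s := add_le_add (add_le_add hsup le_rfl) le_rfl
    exact tsub_le_iff_right.2 key
  · -- ≥ : each term is a lower bound
    refine iSup_le fun n => ?_
    have := Measure.le_iff.1 (my_le_sub_add μ ν) (e n) (hemeas n)
    rw [Measure.add_apply] at this
    exact le_trans (tsub_le_iff_right.2 this) (measure_mono (Set.subset_univ _))

lemma my_exists_enum [CountablyGenerated α] :
    ∃ e : ℕ → Set α, generateSetAlgebra (countableGeneratingSet α) = Set.range e := by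
  have hc : (generateSetAlgebra (countableGeneratingSet α)).Countable :=
    countable_generateSetAlgebra countable_countableGeneratingSet
  have hne : (generateSetAlgebra (countableGeneratingSet α)).Nonempty :=
    ⟨∅, generateSetAlgebra.empty⟩
  exact hc.exists_eq_range hne

lemma my_measurable_sub_univ {β : Type*} [MeasurableSpace β] [CountablyGenerated α]
    (μ ν : β → Measure α) (hμfin : ∀ b, IsFiniteMeasure (μ b)) (hνfin : ∀ b, IsFiniteMeasure (ν b))
    (hμ : ∀ ⦃s : Set α⦄, MeasurableSet s → Measurable fun b => μ b s)
    (hν : ∀ ⦃s : Set α⦄, MeasurableSet s → Measurable fun b => ν b s) :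
    Measurable fun b => (μ b - ν b) Set.univ := by
  obtain ⟨e, he⟩ := my_exists_enum (α := α)
  have hemeas : ∀ n, MeasurableSet (e n) := by
    intro n
    have hmem : e n ∈ generateSetAlgebra (countableGeneratingSet α) := he ▸ Set.mem_range_self n
    have h2 : MeasurableSet[MeasurableSpace.generateFrom
        (generateSetAlgebra (countableGeneratingSet α))] (e n) :=
      measurableSet_generateFrom hmem
    rwa [generateFrom_generateSetAlgebra_eq, generateFrom_countableGeneratingSet] at h2
  have : (fun b => (μ b - ν b) Set.univ) = fun b => ⨆ n, (μ b (e n) - ν b (e n)) := by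
    funext b
    have := hμfin b; have := hνfin b
    exact my_sub_univ_eq_iSup (μ b) (ν b) he
  rw [this]
  exact Measurable.iSup fun n => (hμ (hemeas n)).sub (hν (hemeas n))

lemma my_measurable_sub_apply {β : Type*} [MeasurableSpace β] [CountablyGenerated α]
    (μ ν : β → Measure α) (hμfin : ∀ b, IsFiniteMeasure (μ b)) (hνfin : ∀ b, IsFiniteMeasure (ν b))
    (hμ : ∀ ⦃s : Set α⦄, MeasurableSet s → Measurable fun b => μ b s)
    (hν : ∀ ⦃s : Set α⦄, MeasurableSet s → Measurable fun b => ν b s)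
    {t : Set α} (ht : MeasurableSet t) :
    Measurable fun b => (μ b - ν b) t := by
  have heq : ∀ b, (μ b - ν b) t = ((μ b).restrict t - (ν b).restrict t) Set.univ := by
    intro b
    rw [← Measure.restrict_sub_eq_restrict_sub_restrict ht,
      Measure.restrict_apply MeasurableSet.univ, Set.univ_inter]
  simp_rw [heq]
  refine my_measurable_sub_univ _ _ (fun b => ?_) (fun b => ?_) (fun s hs => ?_) (fun s hs => ?_)
  · have := hμfin b; infer_instance
  · have := hνfin b; infer_instance
  · simp_rw [Measure.restrict_apply hs]; exact hμ (hs.inter ht)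
  · simp_rw [Measure.restrict_apply hs]; exact hν (hs.inter ht)

lemma my_tv_nonneg (μ ν : Measure α) : 0 ≤ tv μ ν := ENNReal.toReal_nonneg

lemma my_sub_univ_le (μ ν : Measure α) [IsProbabilityMeasure μ] :
    (μ - ν) Set.univ ≤ 1 :=
  le_trans (Measure.le_iff'.1 Measure.sub_le _) (le_of_eq measure_univ)

lemma my_tv_le_two (μ ν : Measure α) [IsProbabilityMeasure μ] [IsProbabilityMeasure ν] :
    tv μ ν ≤ 2 := by
  have h : (μ - ν) Set.univ + (ν - μ) Set.univ ≤ 2 := by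
    calc (μ - ν) Set.univ + (ν - μ) Set.univ ≤ 1 + 1 :=
        add_le_add (my_sub_univ_le μ ν) (my_sub_univ_le ν μ)
      _ = 2 := one_add_one_eq_two
  calc tv μ ν ≤ (2 : ℝ≥0∞).toReal := ENNReal.toReal_mono (by norm_num) h
    _ = 2 := by norm_num

lemma my_tv_comm (μ ν : Measure α) : tv μ ν = tv ν μ := by
  unfold tv; rw [add_comm]

lemma my_tv_triangle (μ ν κ : Measure α) [IsFiniteMeasure μ] [IsFiniteMeasure ν]
    [IsFiniteMeasure κ] : tv μ ν ≤ tv μ κ + tv κ ν := by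
  have key : ∀ (a b c : Measure α), IsFiniteMeasure a → IsFiniteMeasure b → IsFiniteMeasure c →
      (a - b) Set.univ ≤ (a - c) Set.univ + (c - b) Set.univ := by
    intro a b c ha hb hc
    have h1 : a - b ≤ (a - c) + (c - b) := by
      apply Measure.sub_le_of_le_add
      calc a ≤ (a - c) + c := my_le_sub_add a c
        _ ≤ (a - c) + ((c - b) + b) := add_le_add le_rfl (my_le_sub_add c b)
        _ = ((a - c) + (c - b)) + b := (add_assoc _ _ _).symm
    exact le_trans (Measure.le_iff'.1 h1 _) le_rfl
  have h1 := key μ ν κ inferInstance inferInstance inferInstance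
  have h2 := key ν μ κ inferInstance inferInstance inferInstance
  have hfin : ∀ (a b : Measure α) [IsFiniteMeasure a], (a - b) Set.univ ≠ ∞ := by
    intro a b ha
    exact ne_top_of_le_ne_top (measure_ne_top a _) (Measure.le_iff'.1 Measure.sub_le _)
  unfold tv
  rw [← ENNReal.toReal_add (ENNReal.add_ne_top.2 ⟨hfin μ κ, hfin κ μ⟩)
    (ENNReal.add_ne_top.2 ⟨hfin κ ν, hfin ν κ⟩)]
  apply ENNReal.toReal_mono
  · exact ENNReal.add_ne_top.2 ⟨ENNReal.add_ne_top.2 ⟨hfin μ κ, hfin κ μ⟩,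
      ENNReal.add_ne_top.2 ⟨hfin κ ν, hfin ν κ⟩⟩
  · calc (μ - ν) Set.univ + (ν - μ) Set.univ
        ≤ ((μ - κ) Set.univ + (κ - ν) Set.univ) + ((ν - κ) Set.univ + (κ - μ) Set.univ) :=
          add_le_add h1 h2
      _ = ((μ - κ) Set.univ + (κ - μ) Set.univ) + ((κ - ν) Set.univ + (ν - κ) Set.univ) := by ring

section Group

variable {G : Type*} [MeasurableSpace G] [Monoid G] [MeasurableMul₂ G]

lemma my_ltrans_apply (g : G) (θ : Measure G) {t : Set G} (ht : MeasurableSet t) :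
    ltrans g θ t = θ ((fun h => g * h) ⁻¹' t) :=
  Measure.map_apply (measurable_const_mul g) ht

instance my_ltrans_prob (g : G) (θ : Measure G) [IsProbabilityMeasure θ] :
    IsProbabilityMeasure (ltrans g θ) :=
  Measure.isProbabilityMeasure_map (measurable_const_mul g).aemeasurable

lemma my_measurable_ltrans_apply (θ : Measure G) [SFinite θ] {t : Set G} (ht : MeasurableSet t) :
    Measurable fun g => ltrans g θ t := by
  have heq : ∀ g : G, ltrans g θ t = ∫⁻ h, t.indicator (fun _ => (1 : ℝ≥0∞)) (g * h) ∂θ := by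
    intro g
    rw [my_ltrans_apply g θ ht, ← lintegral_indicator_one (ht.preimage (measurable_const_mul g))]
    apply lintegral_congr
    intro h
    by_cases hh : g * h ∈ t <;> simp [Set.indicator_apply, hh]
  simp_rw [heq]
  apply Measurable.lintegral_prod_right' (f := fun p : G × G => t.indicator (fun _ => (1 : ℝ≥0∞)) (p.1 * p.2))
  exact (measurable_one.indicator ht).comp measurable_mul

lemma my_mconv_apply (α θ : Measure G) [SFinite α] [SFinite θ] {t : Set G}
    (ht : MeasurableSet t) :
    mconv α θ t = ∫⁻ g, ltrans g θ t ∂α := by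
  rw [mconv, Measure.map_apply measurable_mul ht, Measure.prod_apply (measurable_mul ht)]
  congr 1
  funext g
  rw [my_ltrans_apply g θ ht]
  rfl

instance my_mconv_prob (α θ : Measure G) [IsProbabilityMeasure α] [IsProbabilityMeasure θ] :
    IsProbabilityMeasure (mconv α θ) :=
  Measure.isProbabilityMeasure_map measurable_mul.aemeasurable

variable [MeasurableSpace.CountablyGenerated G]

lemma my_measurable_giry_sub (θ : Measure G) [IsProbabilityMeasure θ] :
    Measurable (fun g => ltrans g θ - θ) ∧ Measurable (fun g => θ - ltrans g θ) := by
  constructor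
  · apply Measure.measurable_of_measurable_coe
    intro s hs
    exact my_measurable_sub_apply (fun g => ltrans g θ) (fun _ => θ) (fun g => inferInstance)
      (fun _ => inferInstance) (fun t ht => my_measurable_ltrans_apply θ ht)
      (fun t ht => measurable_const) hs
  · apply Measure.measurable_of_measurable_coe
    intro s hs
    exact my_measurable_sub_apply (fun _ => θ) (fun g => ltrans g θ) (fun _ => inferInstance)
      (fun g => inferInstance) (fun t ht => measurable_const)
      (fun t ht => my_measurable_ltrans_apply θ ht) hs

lemma my_D1 (α θ : Measure G) [IsProbabilityMeasure α] [IsProbabilityMeasure θ] :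
    (mconv α θ - θ) Set.univ ≤ ∫⁻ g, (ltrans g θ - θ) Set.univ ∂α := by
  obtain ⟨hm1, -⟩ := my_measurable_giry_sub θ
  have hle : mconv α θ - θ ≤ α.bind (fun g => ltrans g θ - θ) := by
    apply Measure.sub_le_of_le_add
    rw [Measure.le_iff]
    intro t ht
    rw [my_mconv_apply α θ ht, Measure.add_apply, Measure.bind_apply ht hm1.aemeasurable]
    calc ∫⁻ g, ltrans g θ t ∂α ≤ ∫⁻ g, ((ltrans g θ - θ) t + θ t) ∂α := by
          apply lintegral_mono
          intro g
          have := Measure.le_iff.1 (my_le_sub_add (ltrans g θ) θ) t ht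
          rwa [Measure.add_apply] at this
      _ = ∫⁻ g, (ltrans g θ - θ) t ∂α + θ t := by
          rw [lintegral_add_right _ measurable_const, lintegral_const, measure_univ, mul_one]
  calc (mconv α θ - θ) Set.univ ≤ (α.bind (fun g => ltrans g θ - θ)) Set.univ :=
      Measure.le_iff'.1 hle _
    _ = ∫⁻ g, (ltrans g θ - θ) Set.univ ∂α :=
      Measure.bind_apply MeasurableSet.univ hm1.aemeasurable

lemma my_D2 (α θ : Measure G) [IsProbabilityMeasure α] [IsProbabilityMeasure θ] :
    (θ - mconv α θ) Set.univ ≤ ∫⁻ g, (θ - ltrans g θ) Set.univ ∂α := by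
  obtain ⟨-, hm2⟩ := my_measurable_giry_sub θ
  have hle : θ - mconv α θ ≤ α.bind (fun g => θ - ltrans g θ) := by
    apply Measure.sub_le_of_le_add
    rw [Measure.le_iff]
    intro t ht
    rw [Measure.add_apply, my_mconv_apply α θ ht, Measure.bind_apply ht hm2.aemeasurable]
    calc θ t = ∫⁻ _, θ t ∂α := by rw [lintegral_const, measure_univ, mul_one]
      _ ≤ ∫⁻ g, ((θ - ltrans g θ) t + ltrans g θ t) ∂α := by
          apply lintegral_mono
          intro g
          have := Measure.le_iff.1 (my_le_sub_add θ (ltrans g θ)) t ht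
          rwa [Measure.add_apply] at this
      _ = ∫⁻ g, (θ - ltrans g θ) t ∂α + ∫⁻ g, ltrans g θ t ∂α :=
          lintegral_add_left ((Measure.measurable_coe ht).comp hm2) _
  calc (θ - mconv α θ) Set.univ ≤ (α.bind (fun g => θ - ltrans g θ)) Set.univ :=
      Measure.le_iff'.1 hle _
    _ = ∫⁻ g, (θ - ltrans g θ) Set.univ ∂α :=
      Measure.bind_apply MeasurableSet.univ hm2.aemeasurable

lemma my_F_meas (θ : Measure G) [IsProbabilityMeasure θ] :
    Measurable fun h : G => tv (ltrans h θ) θ := by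
  have m1 : Measurable fun h : G => (ltrans h θ - θ) Set.univ :=
    my_measurable_sub_univ (fun g => ltrans g θ) (fun _ => θ) (fun _ => inferInstance)
      (fun _ => inferInstance) (fun t ht => my_measurable_ltrans_apply θ ht)
      (fun t ht => measurable_const)
  have m2 : Measurable fun h : G => (θ - ltrans h θ) Set.univ :=
    my_measurable_sub_univ (fun _ => θ) (fun g => ltrans g θ) (fun _ => inferInstance)
      (fun _ => inferInstance) (fun t ht => measurable_const)
      (fun t ht => my_measurable_ltrans_apply θ ht)
  exact ENNReal.measurable_toReal.comp (m1.add m2)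

lemma my_tv_mconv_le_disc (α θ : Measure G) [IsProbabilityMeasure α] [IsProbabilityMeasure θ] :
    tv (mconv α θ) θ ≤ disc α θ := by
  set f1 : G → ℝ≥0∞ := fun g => (ltrans g θ - θ) Set.univ with hf1
  set f2 : G → ℝ≥0∞ := fun g => (θ - ltrans g θ) Set.univ with hf2
  have m1 : Measurable f1 :=
    my_measurable_sub_univ (fun g => ltrans g θ) (fun _ => θ) (fun _ => inferInstance)
      (fun _ => inferInstance) (fun t ht => my_measurable_ltrans_apply θ ht)
      (fun t ht => measurable_const)
  have m2 : Measurable f2 :=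
    my_measurable_sub_univ (fun _ => θ) (fun g => ltrans g θ) (fun _ => inferInstance)
      (fun _ => inferInstance) (fun t ht => measurable_const)
      (fun t ht => my_measurable_ltrans_apply θ ht)
  have hbd : ∀ g, f1 g + f2 g ≤ 2 := by
    intro g
    calc f1 g + f2 g ≤ 1 + 1 := add_le_add (my_sub_univ_le _ _) (my_sub_univ_le _ _)
      _ = 2 := one_add_one_eq_two
  have hlint_ne : ∫⁻ g, (f1 g + f2 g) ∂α ≠ ∞ := by
    refine ne_top_of_le_ne_top ?_ (lintegral_mono hbd)
    rw [lintegral_const, measure_univ, mul_one]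
    norm_num
  have hdisc : disc α θ = (∫⁻ g, (f1 g + f2 g) ∂α).toReal := by
    rw [disc]
    rw [← integral_toReal (f := fun g => f1 g + f2 g) ((m1.add m2).aemeasurable) ?_]
    · rfl
    · exact Filter.Eventually.of_forall fun g => lt_of_le_of_lt (hbd g) (by norm_num)
  rw [hdisc, tv]
  apply ENNReal.toReal_mono hlint_ne
  calc (mconv α θ - θ) Set.univ + (θ - mconv α θ) Set.univ
      ≤ (∫⁻ g, f1 g ∂α) + (∫⁻ g, f2 g ∂α) := add_le_add (my_D1 α θ) (my_D2 α θ)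
    _ = ∫⁻ g, (f1 g + f2 g) ∂α := (lintegral_add_left m1 _).symm

lemma my_ltrans_mconv (g : G) (φ θ : Measure G) [SFinite φ] [SFinite θ] :
    ltrans g (mconv φ θ) = mconv (ltrans g φ) θ := by
  unfold ltrans mconv
  rw [Measure.map_map (measurable_const_mul g) measurable_mul]
  have key : (φ.map (fun h => g * h)).prod θ
      = (φ.prod θ).map (Prod.map (fun h => g * h) id) := by
    calc (φ.map (fun h => g * h)).prod θ = (φ.map (fun h => g * h)).prod (θ.map id) := by
          rw [Measure.map_id]
      _ = (φ.prod θ).map (Prod.map (fun h => g * h) id) :=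
          Measure.map_prod_map _ _ (measurable_const_mul g) measurable_id
  rw [key, Measure.map_map measurable_mul ((measurable_const_mul g).prodMap measurable_id)]
  congr 1
  funext p
  simp [Prod.map, mul_assoc]

lemma my_disc_ltrans (g : G) (φ θ : Measure G) [IsProbabilityMeasure φ]
    [IsProbabilityMeasure θ] :
    disc (ltrans g φ) θ = ∫ h, tv (ltrans (g * h) θ) θ ∂φ := by
  rw [disc, ltrans, integral_map (measurable_const_mul g).aemeasurable
    (my_F_meas θ).aestronglyMeasurable]

lemma my_measurable_disc_ltrans (φ θ : Measure G) [IsProbabilityMeasure φ]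
    [IsProbabilityMeasure θ] :
    StronglyMeasurable fun g => disc (ltrans g φ) θ := by
  have : (fun g => disc (ltrans g φ) θ) = fun g => ∫ h, tv (ltrans (g * h) θ) θ ∂φ := by
    funext g; exact my_disc_ltrans g φ θ
  rw [this]
  exact (((my_F_meas θ).comp measurable_mul).stronglyMeasurable).integral_prod_right'

lemma my_disc_bounds (m θ : Measure G) [IsProbabilityMeasure m] [IsProbabilityMeasure θ] :
    0 ≤ disc m θ ∧ disc m θ ≤ 2 := by
  constructor
  · exact integral_nonneg fun g => my_tv_nonneg _ _
  · have hInt : Integrable (fun g => tv (ltrans g θ) θ) m := by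
      refine ⟨(my_F_meas θ).aestronglyMeasurable, ?_⟩
      apply HasFiniteIntegral.of_bounded (C := 2)
      refine Filter.Eventually.of_forall fun g => ?_
      rw [Real.norm_eq_abs, abs_of_nonneg (my_tv_nonneg _ _)]
      exact my_tv_le_two _ _
    have step : disc m θ ≤ ∫ _, (2 : ℝ) ∂m :=
      integral_mono hInt (integrable_const 2) (fun g => my_tv_le_two _ _)
    calc disc m θ ≤ ∫ _, (2 : ℝ) ∂m := step
      _ = 2 := by rw [integral_const]; simp

lemma my_disc_mconv (m φ θ : Measure G) [IsProbabilityMeasure m] [IsProbabilityMeasure φ]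
    [IsProbabilityMeasure θ] :
    disc (mconv m φ) θ = ∫ g, disc (ltrans g φ) θ ∂m := by
  have hFm := my_F_meas θ
  have hInt : Integrable (fun p : G × G => tv (ltrans (p.1 * p.2) θ) θ) (m.prod φ) := by
    refine ⟨((hFm.comp measurable_mul).stronglyMeasurable).aestronglyMeasurable, ?_⟩
    apply HasFiniteIntegral.of_bounded (C := 2)
    refine Filter.Eventually.of_forall fun p => ?_
    rw [Real.norm_eq_abs, abs_of_nonneg (my_tv_nonneg _ _)]
    exact my_tv_le_two _ _
  calc disc (mconv m φ) θ = ∫ p : G × G, tv (ltrans (p.1 * p.2) θ) θ ∂(m.prod φ) := by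
        rw [disc, mconv, integral_map measurable_mul.aemeasurable hFm.aestronglyMeasurable]
    _ = ∫ g, ∫ h, tv (ltrans (g * h) θ) θ ∂φ ∂m := integral_prod _ hInt
    _ = ∫ g, disc (ltrans g φ) θ ∂m := by
        apply integral_congr_ae
        refine Filter.Eventually.of_forall fun g => ?_
        exact (my_disc_ltrans g φ θ).symm

end Group

end AuxLemmas

/-- If `(θ_n)` are probability measures with `Δ(m, θ_n) → 0` for every
probability measure `m ≺ λ`, and `φ` is a probability measure with `φ ≺ λ`, then
`Δ(m, φ * θ_n) → 0` for every probability measure `m ≺ λ`. -/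
theorem stmt3 {G : Type*} [TopologicalSpace G] [Group G] [IsTopologicalGroup G]
    [LocallyCompactSpace G] [SecondCountableTopology G] [MeasurableSpace G] [BorelSpace G]
    (lam : Measure G) (hlam : lam.IsHaarMeasure)
    (θ : ℕ → Measure G) (hθ : ∀ n, IsProbabilityMeasure (θ n))
    (hISAI : ∀ m : Measure G, IsProbabilityMeasure m → m ≪ lam →
      Tendsto (fun n => disc m (θ n)) atTop (nhds 0))
    (φ : Measure G) (hφ : IsProbabilityMeasure φ) (hφac : φ ≪ lam) :
    ∀ m : Measure G, IsProbabilityMeasure m → m ≪ lam →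
      Tendsto (fun n => disc m (mconv φ (θ n))) atTop (nhds 0) := by
  intro m hm hmac
  haveI := hlam.toIsMulLeftInvariant
  haveI : IsProbabilityMeasure (mconv m φ) := my_mconv_prob m φ
  have hconv_ac : mconv m φ ≪ lam := by
    intro A hA
    obtain ⟨B, hAB, hBmeas, hB0⟩ := exists_measurable_superset_of_null hA
    refine measure_mono_null hAB ?_
    rw [my_mconv_apply m φ hBmeas]
    have hz : ∀ g : G, ltrans g φ B = 0 := by
      intro g
      rw [my_ltrans_apply g φ hBmeas]
      apply hφac
      have hmap : lam ((fun h => g * h) ⁻¹' B) = lam.map (fun h => g * h) B :=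
        (Measure.map_apply (measurable_const_mul g) hBmeas).symm
      rw [hmap, map_mul_left_eq_self lam g]
      exact hB0
    simp [hz]
  have key : ∀ n, disc m (mconv φ (θ n)) ≤ disc (mconv m φ) (θ n) + disc φ (θ n) := by
    intro n
    haveI := hθ n
    have hpt : ∀ g, tv (ltrans g (mconv φ (θ n))) (mconv φ (θ n))
        ≤ disc (ltrans g φ) (θ n) + disc φ (θ n) := by
      intro g
      rw [my_ltrans_mconv g φ (θ n)]
      calc tv (mconv (ltrans g φ) (θ n)) (mconv φ (θ n))
          ≤ tv (mconv (ltrans g φ) (θ n)) (θ n) + tv (θ n) (mconv φ (θ n)) :=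
            my_tv_triangle _ _ _
        _ ≤ disc (ltrans g φ) (θ n) + disc φ (θ n) := by
            refine add_le_add (my_tv_mconv_le_disc _ _) ?_
            rw [my_tv_comm]
            exact my_tv_mconv_le_disc _ _
    have hIntG : Integrable (fun g => disc (ltrans g φ) (θ n)) m := by
      refine ⟨(my_measurable_disc_ltrans φ (θ n)).aestronglyMeasurable, ?_⟩
      apply HasFiniteIntegral.of_bounded (C := 2)
      refine Filter.Eventually.of_forall fun g => ?_
      obtain ⟨h0, h2⟩ := my_disc_bounds (ltrans g φ) (θ n)
      rw [Real.norm_eq_abs, abs_of_nonneg h0]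
      exact h2
    calc disc m (mconv φ (θ n)) ≤ ∫ g, (disc (ltrans g φ) (θ n) + disc φ (θ n)) ∂m := by
          exact integral_mono_of_nonneg (Filter.Eventually.of_forall fun g => my_tv_nonneg _ _)
            (hIntG.add (integrable_const _)) (Filter.Eventually.of_forall hpt)
      _ = (∫ g, disc (ltrans g φ) (θ n) ∂m) + disc φ (θ n) := by
          rw [integral_add hIntG (integrable_const _), integral_const]
          simp
      _ = disc (mconv m φ) (θ n) + disc φ (θ n) := by rw [← my_disc_mconv]
  have h1 := hISAI (mconv m φ) inferInstance hconv_ac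
  have h2 := hISAI φ hφ hφac
  have hsum : Tendsto (fun n => disc (mconv m φ) (θ n) + disc φ (θ n)) atTop (nhds 0) := by
    simpa using h1.add h2
  refine squeeze_zero (fun n => ?_) key hsum
  haveI := hθ n
  haveI : IsProbabilityMeasure (mconv φ (θ n)) := my_mconv_prob φ (θ n)
  exact (my_disc_bounds m (mconv φ (θ n))).1
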